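/- Let M be a smooth manifold with a Poisson pencil P_λ = P_2 - λP_1 (so P_1, P_2 are compatible Poisson bivectors), and suppose the pencil is exact with Liouville vector field Z, i.e. Lie_Z P_2 = P_1 and Lie_Z P_1 = 0. If H(λ) is a formal Casimir of the pencil, i.e. P_λ dH(λ) = 0, and X_λ = P_1 dH(λ), then X_λ = P_λ dH*(λ) where H*(λ) = -Lie_Z H(λ). -/
import Mathlib


/-- On a manifold with an exact Poisson pencil `P_λ = P₂ - λP₁` with
Liouville vector field `Z`, if `H(λ)` is a formal Casimir of the pencil, i.e.
`P_λ dH(λ) = 0`, and `X_λ = P₁ dH(λ)`, then `X_λ = P_λ dH*(λ)` where `H*(λ) = -Lie_Z H(λ)`.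
We model functions `F`, 1-forms `Ω` and vector fields `X` abstractly; the Lie derivative
of a bivector `P` along `Z` is encoded by the Leibniz rule
`(Lie_Z P) ω = Lie_Z (P ω) - P (Lie_Z ω)`, so exactness reads as `hexact1`, `hexact2`. -/
theorem stmt0
    (F Ω X : Type*) [AddCommGroup F] [Module ℝ F] [AddCommGroup Ω] [Module ℝ Ω]
    [AddCommGroup X] [Module ℝ X]
    (d : F →ₗ[ℝ] Ω)                 -- exterior differential on functions
    (P₁ P₂ : Ω →ₗ[ℝ] X)             -- the two compatible Poisson bivectors of the pencil
    (LieZF : F →ₗ[ℝ] F)             -- Lie derivative along Z on functions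
    (LieZΩ : Ω →ₗ[ℝ] Ω)             -- Lie derivative along Z on 1-forms
    (LieZX : X →ₗ[ℝ] X)             -- Lie derivative along Z on vector fields
    -- the Lie derivative commutes with the differential d
    (hdL : ∀ f : F, LieZΩ (d f) = d (LieZF f))
    -- exactness: Lie_Z P₂ = P₁ and Lie_Z P₁ = 0 (bivector Lie derivative via Leibniz rule)
    (hexact2 : ∀ ω : Ω, LieZX (P₂ ω) - P₂ (LieZΩ ω) = P₁ ω)
    (hexact1 : ∀ ω : Ω, LieZX (P₁ ω) - P₁ (LieZΩ ω) = 0)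
    -- H(λ): a (formal) Casimir of the pencil:  (P₂ - λ P₁) dH(λ) = 0
    (H : ℝ → F)
    (hCasimir : ∀ l : ℝ, P₂ (d (H l)) - l • P₁ (d (H l)) = 0) :
    -- X_λ := P₁ dH(λ) satisfies X_λ = (P₂ - λ P₁) d H*(λ) with H*(λ) = -Lie_Z H(λ)
    ∀ l : ℝ, P₁ (d (H l)) =
      P₂ (d (-(LieZF (H l)))) - l • P₁ (d (-(LieZF (H l)))) := by
  intro l
  have key := congrArg LieZX (hCasimir l)
  simp only [map_sub, map_smul, map_zero] at key
  have h2 := hexact2 (d (H l))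
  have h1 := hexact1 (d (H l))
  rw [hdL] at h1 h2
  have hX2 : LieZX (P₂ (d (H l))) = P₁ (d (H l)) + P₂ (d (LieZF (H l))) := by
    linear_combination (norm := abel) h2
  have hX1 : LieZX (P₁ (d (H l))) = P₁ (d (LieZF (H l))) := by
    linear_combination (norm := abel) h1
  rw [hX1, hX2] at key
  simp only [map_neg, smul_neg]
  linear_combination (norm := abel) key
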